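/- Let 0 < p ≤ 1 and let A be an M×N real matrix with restricted isometry constants δ_S. Suppose k > 1 with kS ∈ ℕ and δ_{kS} + k^{2/p - 1} δ_{(k+1)S} < k^{2/p - 1} − 1. Then for every S-sparse x ∈ ℝ^N, x is the unique minimizer of ‖y‖_p subject to Ay = Ax; i.e., if ‖z‖_p ≤ ‖x‖_p and Az = Ax then z = x. -/

import Mathlib

noncomputable def lpNorm {N : ℕ} (p : ℝ) (x : Fin N → ℝ) : ℝ :=
  (∑ i, |x i| ^ p) ^ (1 / p)

noncomputable def l2Norm {M : ℕ} (x : Fin M → ℝ) : ℝ :=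
  Real.sqrt (∑ i, (x i) ^ 2)

/-- `x` has at most `S` nonzero entries. -/
def IsSparse {N : ℕ} (S : ℕ) (x : Fin N → ℝ) : Prop :=
  {i | x i ≠ 0}.ncard ≤ S

lemma aux_add_rpow_le {a b q : ℝ} (ha : 0 ≤ a) (hb : 0 ≤ b) (hq : 1 ≤ q) :
    a ^ q + b ^ q ≤ (a + b) ^ q := by
  have h := NNReal.add_rpow_le_rpow_add a.toNNReal b.toNNReal hq
  have h2 : ((a.toNNReal ^ q + b.toNNReal ^ q : NNReal) : ℝ)
      ≤ (((a.toNNReal + b.toNNReal) ^ q : NNReal) : ℝ) := by exact_mod_cast h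
  rwa [NNReal.coe_add, NNReal.coe_rpow, NNReal.coe_rpow, NNReal.coe_rpow, NNReal.coe_add,
    Real.coe_toNNReal a ha, Real.coe_toNNReal b hb] at h2

lemma aux_rpow_add_le {a b q : ℝ} (ha : 0 ≤ a) (hb : 0 ≤ b) (hq0 : 0 ≤ q) (hq : q ≤ 1) :
    (a + b) ^ q ≤ a ^ q + b ^ q := by
  have h := NNReal.rpow_add_le_add_rpow a.toNNReal b.toNNReal hq0 hq
  have h2 : (((a.toNNReal + b.toNNReal) ^ q : NNReal) : ℝ)
      ≤ ((a.toNNReal ^ q + b.toNNReal ^ q : NNReal) : ℝ) := by exact_mod_cast h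
  rwa [NNReal.coe_add, NNReal.coe_rpow, NNReal.coe_rpow, NNReal.coe_rpow, NNReal.coe_add,
    Real.coe_toNNReal a ha, Real.coe_toNNReal b hb] at h2

lemma aux_sum_rpow_le_rpow_sum {ι : Type*} (s : Finset ι) (f : ι → ℝ)
    (hf : ∀ i ∈ s, 0 ≤ f i) {q : ℝ} (hq : 1 ≤ q) :
    ∑ i ∈ s, f i ^ q ≤ (∑ i ∈ s, f i) ^ q := by
  classical
  induction s using Finset.cons_induction with
  | empty => simp [Real.zero_rpow (by linarith : q ≠ 0)]
  | cons a s ha ih =>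
    rw [Finset.sum_cons, Finset.sum_cons]
    have h1 : ∑ i ∈ s, f i ^ q ≤ (∑ i ∈ s, f i) ^ q :=
      ih (fun i hi => hf i (Finset.mem_cons_of_mem hi))
    have h2 : f a ^ q + (∑ i ∈ s, f i) ^ q ≤ (f a + ∑ i ∈ s, f i) ^ q :=
      aux_add_rpow_le (hf a (Finset.mem_cons_self a s))
        (Finset.sum_nonneg fun i hi => hf i (Finset.mem_cons_of_mem hi)) hq
    linarith

lemma l2Norm_nonneg {M : ℕ} (y : Fin M → ℝ) : 0 ≤ l2Norm y := Real.sqrt_nonneg _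

lemma l2Norm_sq {M : ℕ} (y : Fin M → ℝ) : l2Norm y ^ 2 = ∑ i, (y i) ^ 2 :=
  Real.sq_sqrt (Finset.sum_nonneg fun i _ => sq_nonneg _)

lemma l2Norm_eq_norm {M : ℕ} (y : Fin M → ℝ) :
    l2Norm y = ‖(WithLp.equiv 2 (Fin M → ℝ)).symm y‖ := by
  have h := EuclideanSpace.norm_eq
    (((WithLp.equiv 2 (Fin M → ℝ)).symm y : WithLp 2 (Fin M → ℝ)) : EuclideanSpace ℝ (Fin M))
  rw [h]
  unfold l2Norm
  congr 1
  refine Finset.sum_congr rfl fun i _ => ?_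
  rw [show ((WithLp.equiv 2 (Fin M → ℝ)).symm y).ofLp i = y i from rfl, Real.norm_eq_abs, sq_abs]

lemma l2Norm_sum_le {M : ℕ} {ι : Type*} (s : Finset ι) (v : ι → Fin M → ℝ) :
    l2Norm (∑ j ∈ s, v j) ≤ ∑ j ∈ s, l2Norm (v j) := by
  rw [l2Norm_eq_norm]
  have : (WithLp.equiv 2 (Fin M → ℝ)).symm (∑ j ∈ s, v j)
      = ∑ j ∈ s, (WithLp.equiv 2 (Fin M → ℝ)).symm (v j) := WithLp.toLp_sum (p := 2) (s := s) (f := v)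
  rw [this]
  refine (norm_sum_le _ _).trans ?_
  exact Finset.sum_le_sum fun j _ => le_of_eq (l2Norm_eq_norm (v j)).symm

lemma l2Norm_neg {M : ℕ} (y : Fin M → ℝ) : l2Norm (-y) = l2Norm y := by
  unfold l2Norm; congr 1; exact Finset.sum_congr rfl fun i _ => by simp

set_option maxHeartbeats 2000000 in
theorem lp_min_exact_recovery {M N : ℕ} (p : ℝ) (hp0 : 0 < p) (hp1 : p ≤ 1)
    (A : Matrix (Fin M) (Fin N) ℝ) (δ : ℕ → ℝ)
    (hRIP : ∀ (s : ℕ) (c : Fin N → ℝ), IsSparse s c →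
      (1 - δ s) * l2Norm c ^ 2 ≤ l2Norm (A.mulVec c) ^ 2 ∧
      l2Norm (A.mulVec c) ^ 2 ≤ (1 + δ s) * l2Norm c ^ 2)
    (S : ℕ) (hS : 0 < S) (k : ℝ) (hk : 1 < k) (kS : ℕ) (hkS : (kS : ℝ) = k * S)
    (hcond : δ kS + k ^ (2 / p - 1) * δ (kS + S) < k ^ (2 / p - 1) - 1)
    (x z : Fin N → ℝ) (hx : IsSparse S x)
    (hz : lpNorm p z ≤ lpNorm p x) (hAz : A.mulVec z = A.mulVec x) :
    z = x := by
  classical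
  rcases Nat.eq_zero_or_pos N with hN | hN
  · subst hN; funext i; exact i.elim0
  -- numeric facts
  have hk0 : (0:ℝ) < k := lt_trans one_pos hk
  have hS0 : (0:ℝ) < S := by exact_mod_cast hS
  have hkS0 : (0:ℝ) < kS := by rw [hkS]; positivity
  have hkSpos : 0 < kS := by exact_mod_cast hkS0
  have hp2 : p < 2 := by linarith
  have htpos : (0:ℝ) < 2/p - 1 := by
    have : 1 < 2/p := by rw [lt_div_iff₀ hp0]; linarith
    linarith
  have hkt : (0:ℝ) < k ^ (2/p - 1) := Real.rpow_pos_of_pos hk0 _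
  have hinvp : 1 ≤ 1/p := by rw [le_div_iff₀ hp0]; linarith
  -- δ kS ≥ 0
  have hδ0 : 0 ≤ δ kS := by
    set c : Fin N → ℝ := fun i => if i = ⟨0, hN⟩ then 1 else 0 with hcdef
    have hsp : IsSparse kS c := by
      have hsub : {i | c i ≠ 0} ⊆ {(⟨0, hN⟩ : Fin N)} := by
        intro i hi
        simp only [hcdef, Set.mem_setOf_eq, ne_eq, ite_eq_right_iff, not_forall] at hi
        exact hi.1
      refine le_trans (Set.ncard_le_ncard hsub (Set.finite_singleton _)) ?_
      rw [Set.ncard_singleton]; omega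
    have hc2 : l2Norm c ^ 2 = 1 := by
      rw [l2Norm_sq]
      have : ∀ i, (c i)^2 = if i = ⟨0, hN⟩ then (1:ℝ) else 0 := by
        intro i; simp only [hcdef]; split <;> norm_num
      simp only [this, Finset.sum_ite_eq', Finset.mem_univ, if_true]
    obtain ⟨h1, h2⟩ := hRIP kS c hsp
    rw [hc2, mul_one] at h1 h2
    linarith
  -- the difference vector
  set h : Fin N → ℝ := z - x with hhdef
  suffices hh0 : h = 0 by
    funext i
    have := congrFun hh0 i
    simp only [hhdef, Pi.sub_apply, Pi.zero_apply, sub_eq_zero] at this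
    exact this
  have hAh : A.mulVec h = 0 := by
    rw [hhdef, Matrix.mulVec_sub, hAz, sub_self]
  have hhx : ∀ i, h i = z i - x i := fun i => rfl
  -- support sets
  set T0 : Finset (Fin N) := Finset.univ.filter (fun i => x i ≠ 0) with hT0def
  have hT0card : T0.card ≤ S := by
    have hset : ({i | x i ≠ 0} : Set (Fin N)) = ↑T0 := by
      ext i; simp [hT0def]
    rw [IsSparse, hset, Set.ncard_coe_finset] at hx
    exact hx
  set R : Finset (Fin N) := Finset.univ.filter (fun i => ¬ x i ≠ 0) with hRdef
  set m : ℕ := R.card with hmdef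
  -- sorted enumeration of R by decreasing |h|
  set E : {v // v ∈ R} ≃ Fin m := R.equivFin with hEdef
  set g : Fin m → ℝ := fun i => -|h ((E.symm i : {v // v ∈ R}) : Fin N)| with hgdef
  set π : Equiv.Perm (Fin m) := Tuple.sort g with hπdef
  set e : Fin m → Fin N := fun i => ((E.symm (π i) : {v // v ∈ R}) : Fin N) with hedef
  have he_inj : Function.Injective e := by
    intro i j hij
    exact π.injective (E.symm.injective (Subtype.val_injective hij))
  have he_mem : ∀ i, e i ∈ R := fun i => (E.symm (π i)).2
  have he_surj : ∀ a, a ∈ R → ∃ i, e i = a := by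
    intro a ha
    refine ⟨π.symm (E ⟨a, ha⟩), ?_⟩
    simp [hedef]
  have he_anti : ∀ i j : Fin m, i ≤ j → |h (e j)| ≤ |h (e i)| := by
    intro i j hij
    have := Tuple.monotone_sort g hij
    simp only [Function.comp_apply, hgdef] at this
    rw [← hπdef] at this
    exact neg_le_neg_iff.mp this
  -- padded decreasing sequence
  set u : ℕ → ℝ := fun n => if hn : n < m then |h (e ⟨n, hn⟩)| else 0 with hudef
  have hu0 : ∀ n, 0 ≤ u n := by
    intro n; rw [hudef]; dsimp only; split
    · exact abs_nonneg _
    · exact le_refl 0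
  have hu_anti : ∀ n n' : ℕ, n ≤ n' → u n' ≤ u n := by
    intro n n' hnn
    by_cases hn' : n' < m
    · have hn : n < m := lt_of_le_of_lt hnn hn'
      rw [hudef]; dsimp only; rw [dif_pos hn', dif_pos hn]
      exact he_anti ⟨n, hn⟩ ⟨n', hn'⟩ hnn
    · have : u n' = 0 := by rw [hudef]; dsimp only; rw [dif_neg hn']
      rw [this]; exact hu0 n
  -- the bridge between sums over ℕ-blocks and sums over index sets in Fin m
  have bridge : ∀ (F : ℝ → ℝ), F 0 = 0 → ∀ a b : ℕ,
      ∑ n ∈ Finset.Ico a b, F (u n) =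
      ∑ i ∈ Finset.univ.filter (fun i : Fin m => a ≤ (i:ℕ) ∧ (i:ℕ) < b), F (|h (e i)|) := by
    intro F hF a b
    rw [← Finset.sum_filter_add_sum_filter_not (Finset.Ico a b) (fun n => n < m)]
    have hz2 : ∑ n ∈ (Finset.Ico a b).filter (fun n => ¬ n < m), F (u n) = 0 := by
      refine Finset.sum_eq_zero fun n hn => ?_
      rw [Finset.mem_filter] at hn
      rw [hudef]; dsimp only; rw [dif_neg hn.2]; exact hF
    rw [hz2, add_zero]
    refine Finset.sum_bij' (i := fun n hn => (⟨n, (Finset.mem_filter.mp hn).2⟩ : Fin m))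
      (j := fun i _ => (i : ℕ)) ?_ ?_ ?_ ?_ ?_
    · intro n hn
      rw [Finset.mem_filter] at hn ⊢
      refine ⟨Finset.mem_univ _, ?_⟩
      have := Finset.mem_Ico.mp hn.1
      exact ⟨this.1, this.2⟩
    · intro i hi
      rw [Finset.mem_filter] at hi ⊢
      exact ⟨Finset.mem_Ico.mpr ⟨hi.2.1, hi.2.2⟩, i.isLt⟩
    · intro n hn; rfl
    · intro i hi; rfl
    · intro n hn
      rw [hudef]; dsimp only; rw [dif_pos (Finset.mem_filter.mp hn).2]
  -- blocks
  set J' : ℕ := m / kS with hJ'def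
  have hlt_div : ∀ n : ℕ, n < (n / kS + 1) * kS := by
    intro n
    calc n = kS * (n / kS) + n % kS := (Nat.div_add_mod _ _).symm
      _ < kS * (n / kS) + kS := Nat.add_lt_add_left (Nat.mod_lt _ hkSpos) _
      _ = (n / kS + 1) * kS := by ring
  have hmlt : m < (J' + 1) * kS := hlt_div m
  set Bf : ℕ → Finset (Fin N) := fun j =>
    (Finset.univ.filter (fun i : Fin m => j*kS ≤ (i:ℕ) ∧ (i:ℕ) < (j+1)*kS)).image e with hBfdef
  set v : ℕ → (Fin N → ℝ) := fun j i => if i ∈ Bf j then h i else 0 with hvdef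
  set v0 : Fin N → ℝ := fun i => if i ∈ T0 ∪ Bf 0 then h i else 0 with hv0def
  have hmemBf : ∀ (j : ℕ) (a : Fin N), a ∈ Bf j ↔ ∃ i₀ : Fin m, e i₀ = a ∧ (i₀:ℕ)/kS = j := by
    intro j a
    rw [hBfdef]; dsimp only
    rw [Finset.mem_image]
    constructor
    · rintro ⟨i₁, hi₁, rfl⟩
      rw [Finset.mem_filter] at hi₁
      exact ⟨i₁, rfl, Nat.div_eq_of_lt_le hi₁.2.1 hi₁.2.2⟩
    · rintro ⟨i₀, rfl, hj⟩
      refine ⟨i₀, ?_, rfl⟩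
      rw [Finset.mem_filter]
      subst hj
      exact ⟨Finset.mem_univ _, Nat.div_mul_le_self _ _, hlt_div _⟩
  have hBfcard : ∀ j, (Bf j).card ≤ kS := by
    intro j
    refine le_trans Finset.card_image_le ?_
    have h1 : (Finset.univ.filter (fun i : Fin m => j*kS ≤ (i:ℕ) ∧ (i:ℕ) < (j+1)*kS)).card
        ≤ (Finset.Ico (j*kS) ((j+1)*kS)).card := by
      refine Finset.card_le_card_of_injOn (fun i => (i:ℕ)) ?_ ?_
      · intro a ha; rw [Finset.mem_coe, Finset.mem_filter] at ha; rw [Finset.mem_coe]; exact Finset.mem_Ico.mpr ⟨ha.2.1, ha.2.2⟩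
      · intro a _ b _ hab; exact Fin.val_injective hab
    rw [Nat.card_Ico] at h1
    refine le_trans h1 (le_of_eq ?_)
    rw [add_mul, one_mul]; omega
  have hsupp_v : ∀ j, {i | v j i ≠ 0} ⊆ ↑(Bf j) := by
    intro j i hi
    simp only [Set.mem_setOf_eq, hvdef] at hi
    by_contra hiB
    rw [Finset.mem_coe] at hiB
    rw [if_neg hiB] at hi
    exact hi rfl
  have hsp_v : ∀ j, IsSparse kS (v j) := by
    intro j
    rw [IsSparse]
    refine le_trans (le_trans (Set.ncard_le_ncard (hsupp_v j) (Finset.finite_toSet _))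
      (le_of_eq (Set.ncard_coe_finset _))) (hBfcard j)
  have hsp_v0 : IsSparse (kS + S) v0 := by
    rw [IsSparse]
    have hsub : {i | v0 i ≠ 0} ⊆ ↑(T0 ∪ Bf 0) := by
      intro i hi
      simp only [Set.mem_setOf_eq, hv0def] at hi
      by_contra hiB
      rw [Finset.mem_coe] at hiB
      rw [if_neg hiB] at hi
      exact hi rfl
    refine le_trans (le_trans (Set.ncard_le_ncard hsub (Finset.finite_toSet _))
      (le_of_eq (Set.ncard_coe_finset _))) ?_
    calc (T0 ∪ Bf 0).card ≤ T0.card + (Bf 0).card := Finset.card_union_le _ _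
      _ ≤ kS + S := by have := hBfcard 0; omega
  -- decomposition of h
  have hdecomp : h = v0 + ∑ j ∈ Finset.range J', v (j+1) := by
    funext i
    rw [Pi.add_apply, Finset.sum_apply]
    by_cases hiT : i ∈ T0
    · have h0 : v0 i = h i := by
        rw [hv0def]; exact if_pos (Finset.mem_union_left _ hiT)
      have hterm : ∀ j ∈ Finset.range J', v (j+1) i = 0 := by
        intro j _
        rw [hvdef]; dsimp only
        rw [if_neg]
        intro hiB
        rw [hmemBf] at hiB
        obtain ⟨i₀, rfl, _⟩ := hiB
        have hmm := he_mem i₀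
        rw [hRdef, Finset.mem_filter] at hmm
        rw [hT0def, Finset.mem_filter] at hiT
        exact hmm.2 hiT.2
      rw [h0, Finset.sum_eq_zero hterm, add_zero]
    · have hiR : i ∈ R := by
        simp only [hRdef, Finset.mem_filter, Finset.mem_univ, true_and]
        simp only [hT0def, Finset.mem_filter, Finset.mem_univ, true_and] at hiT
        exact hiT
      obtain ⟨i₀, rfl⟩ := he_surj i hiR
      have hj₀J : (i₀:ℕ)/kS ≤ J' := by
        rw [hJ'def]; exact Nat.div_le_div_right (le_of_lt i₀.isLt)
      have hmem_iff : ∀ j, e i₀ ∈ Bf j ↔ j = (i₀:ℕ)/kS := by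
        intro j
        rw [hmemBf]
        constructor
        · rintro ⟨i₁, hi₁, hj⟩
          have hii : i₁ = i₀ := he_inj hi₁
          subst hii; omega
        · rintro rfl; exact ⟨i₀, rfl, rfl⟩
      by_cases hj0 : (i₀:ℕ)/kS = 0
      · have h0 : v0 (e i₀) = h (e i₀) := by
          rw [hv0def]; dsimp only
          exact if_pos (Finset.mem_union_right _ (by rw [hmem_iff]; omega))
        have hterm : ∀ j ∈ Finset.range J', v (j+1) (e i₀) = 0 := by
          intro j _
          rw [hvdef]; dsimp only
          rw [if_neg]
          rw [hmem_iff]; omega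
        rw [h0, Finset.sum_eq_zero hterm, add_zero]
      · have h0 : v0 (e i₀) = 0 := by
          rw [hv0def]; dsimp only
          rw [if_neg]
          rw [Finset.mem_union, hmem_iff]
          push_neg
          exact ⟨hiT, by omega⟩
        have hsum : ∑ j ∈ Finset.range J', v (j+1) (e i₀) = h (e i₀) := by
          rw [Finset.sum_eq_single_of_mem ((i₀:ℕ)/kS - 1)
            (Finset.mem_range.mpr
              (lt_of_lt_of_le (Nat.sub_lt (Nat.pos_of_ne_zero hj0) one_pos) hj₀J)) ?_]
          · rw [hvdef]; dsimp only
            rw [if_pos]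
            rw [hmem_iff]
            exact Nat.sub_add_cancel (Nat.one_le_iff_ne_zero.mpr hj0)
          · intro j _ hne
            rw [hvdef]; dsimp only
            rw [if_neg]
            rw [hmem_iff]
            exact fun hc => hne (Nat.eq_sub_of_add_eq hc)
        rw [h0, hsum, zero_add]
  -- sums over blocks
  have hRim : Finset.univ.image e = R := by
    ext a
    simp only [Finset.mem_image, Finset.mem_univ, true_and]
    constructor
    · rintro ⟨i₀, rfl⟩; exact he_mem i₀
    · intro ha; exact he_surj a ha
  have hv_sums : ∀ (j : ℕ) (F : ℝ → ℝ), F 0 = 0 →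
      ∑ i ∈ Bf j, F (|h i|) = ∑ n ∈ Finset.Ico (j*kS) ((j+1)*kS), F (u n) := by
    intro j F hF
    rw [bridge F hF (j*kS) ((j+1)*kS), hBfdef]
    beta_reduce
    exact Finset.sum_image (f := fun i => F |h i|) (fun a _ b _ hab => he_inj hab)
  have hQ : ∀ j, (∑ i, (v j i)^2) = ∑ n ∈ Finset.Ico (j*kS) ((j+1)*kS), (u n)^2 := by
    intro j
    have h1 : ∀ i, (v j i)^2 = if i ∈ Bf j then (h i)^2 else 0 := by
      intro i; rw [hvdef]; dsimp only; split <;> simp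
    simp only [h1]
    rw [Finset.sum_ite_mem Finset.univ (Bf j) (fun i => (h i)^2), Finset.univ_inter]
    have h2 : ∀ i ∈ Bf j, (h i)^2 = (fun t => t^2) (|h i|) := fun i _ => (sq_abs _).symm
    rw [Finset.sum_congr rfl h2, hv_sums j (fun t => t^2) (by norm_num)]
  have hsumR : ∑ i ∈ R, |h i| ^ p = ∑ n ∈ Finset.Ico 0 ((J'+1)*kS), u n ^ p := by
    have hfil : (Finset.univ.filter
        (fun i : Fin m => 0 ≤ (i:ℕ) ∧ (i:ℕ) < (J'+1)*kS)) = Finset.univ := by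
      refine Finset.filter_true_of_mem fun i _ => ⟨Nat.zero_le _, lt_trans i.isLt hmlt⟩
    rw [bridge (fun t => t ^ p) (Real.zero_rpow hp0.ne') 0 ((J'+1)*kS), hfil]
    rw [← hRim, Finset.sum_image (f := fun i => |h i| ^ p) (fun a _ b _ hab => he_inj hab)]
  -- cone constraint
  have hzx : ∑ i, |z i| ^ p ≤ ∑ i, |x i| ^ p := by
    by_contra hlt
    push_neg at hlt
    have hcontra := Real.rpow_lt_rpow
      (Finset.sum_nonneg fun i _ => Real.rpow_nonneg (abs_nonneg _) p) hlt
      (by positivity : (0:ℝ) < 1/p)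
    rw [lpNorm, lpNorm] at hz
    linarith
  have hcone : ∑ i ∈ R, |h i| ^ p ≤ ∑ i ∈ T0, |h i| ^ p := by
    have hsplit : ∀ f : Fin N → ℝ, ∑ i ∈ T0, f i + ∑ i ∈ R, f i = ∑ i, f i := by
      intro f
      rw [hT0def, hRdef]
      exact Finset.sum_filter_add_sum_filter_not _ _ _
    have hRz : ∀ i ∈ R, |z i| ^ p = |h i| ^ p := by
      intro i hi
      rw [hRdef, Finset.mem_filter] at hi
      have hx0 : x i = 0 := not_not.mp hi.2
      rw [hhx i, hx0, sub_zero]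
    have hxoff : ∑ i ∈ R, |x i| ^ p = 0 := by
      refine Finset.sum_eq_zero fun i hi => ?_
      rw [hRdef, Finset.mem_filter] at hi
      rw [not_not.mp hi.2, abs_zero, Real.zero_rpow hp0.ne']
    have htri : ∀ i ∈ T0, |x i| ^ p ≤ |z i| ^ p + |h i| ^ p := by
      intro i _
      have hxi : x i = z i - h i := by rw [hhx i]; ring
      have h1 : |x i| ≤ |z i| + |h i| := by rw [hxi]; exact abs_sub _ _
      calc |x i| ^ p ≤ (|z i| + |h i|) ^ p :=
            Real.rpow_le_rpow (abs_nonneg _) h1 hp0.le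
        _ ≤ |z i| ^ p + |h i| ^ p :=
            aux_rpow_add_le (abs_nonneg _) (abs_nonneg _) hp0.le hp1
    have h1 : ∑ i ∈ T0, |x i| ^ p ≤ ∑ i ∈ T0, |z i| ^ p + ∑ i ∈ T0, |h i| ^ p := by
      rw [← Finset.sum_add_distrib]
      exact Finset.sum_le_sum htri
    have h2 : ∑ i ∈ R, |z i| ^ p = ∑ i ∈ R, |h i| ^ p := Finset.sum_congr rfl hRz
    have h3 := hsplit (fun i => |z i| ^ p)
    have h4 := hsplit (fun i => |x i| ^ p)
    linarith
  -- Hoelder on T0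
  have hHolder : ∑ i ∈ T0, |h i| ^ p
      ≤ (S:ℝ) ^ (1 - p/2) * (∑ i ∈ T0, (h i)^2) ^ (p/2) := by
    have hq2p : (1:ℝ) ≤ 2/p := by rw [le_div_iff₀ hp0]; linarith
    have hh2 := Real.rpow_sum_le_const_mul_sum_rpow_of_nonneg T0
      (f := fun i => |h i| ^ p) hq2p (fun i _ => Real.rpow_nonneg (abs_nonneg _) p)
    have hp2p : p * (2/p) = 2 := by field_simp
    have hpow : ∀ i : Fin N, (|h i| ^ p) ^ (2/p : ℝ) = (h i)^2 := by
      intro i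
      rw [← Real.rpow_mul (abs_nonneg _), hp2p, Real.rpow_two, sq_abs]
    have hsum_nonneg : (0:ℝ) ≤ ∑ i ∈ T0, |h i| ^ p :=
      Finset.sum_nonneg fun i _ => Real.rpow_nonneg (abs_nonneg _) p
    have hsq_nonneg : (0:ℝ) ≤ ∑ i ∈ T0, (h i)^2 :=
      Finset.sum_nonneg fun i _ => sq_nonneg _
    have hexp : (2/p - 1)*(p/2) = 1 - p/2 := by field_simp
    calc ∑ i ∈ T0, |h i| ^ p
        = ((∑ i ∈ T0, |h i| ^ p) ^ (2/p : ℝ)) ^ (p/2 : ℝ) := by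
          rw [← Real.rpow_mul hsum_nonneg]
          have h21 : (2/p) * (p/2) = 1 := by field_simp
          rw [h21, Real.rpow_one]
      _ ≤ ((T0.card:ℝ) ^ (2/p - 1 : ℝ) * ∑ i ∈ T0, (|h i| ^ p) ^ (2/p : ℝ)) ^ (p/2 : ℝ) := by
          refine Real.rpow_le_rpow (Real.rpow_nonneg hsum_nonneg _) hh2 (by positivity)
      _ = ((T0.card:ℝ) ^ (2/p - 1 : ℝ)) ^ (p/2 : ℝ) * (∑ i ∈ T0, (h i)^2) ^ (p/2 : ℝ) := by
          simp only [hpow]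
          rw [Real.mul_rpow (Real.rpow_nonneg (Nat.cast_nonneg _) _) hsq_nonneg]
      _ ≤ (S:ℝ) ^ (1 - p/2) * (∑ i ∈ T0, (h i)^2) ^ (p/2) := by
          refine mul_le_mul_of_nonneg_right ?_ (Real.rpow_nonneg hsq_nonneg _)
          rw [← Real.rpow_mul (Nat.cast_nonneg _), hexp]
          refine Real.rpow_le_rpow (Nat.cast_nonneg _) ?_ (by linarith)
          exact_mod_cast hT0card
  -- nonnegativity of various sums
  have hsumTp0 : (0:ℝ) ≤ ∑ i ∈ T0, |h i| ^ p :=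
    Finset.sum_nonneg fun i _ => Real.rpow_nonneg (abs_nonneg _) p
  have hsumRp0 : (0:ℝ) ≤ ∑ i ∈ R, |h i| ^ p :=
    Finset.sum_nonneg fun i _ => Real.rpow_nonneg (abs_nonneg _) p
  have hsqT0 : (0:ℝ) ≤ ∑ i ∈ T0, (h i)^2 :=
    Finset.sum_nonneg fun i _ => sq_nonneg _
  have hp2p : p * (2/p) = 2 := by field_simp
  -- per-block tail estimate
  have hvnorm : ∀ j : ℕ, l2Norm (v (j+1)) ≤
      (kS:ℝ)^((1:ℝ)/2 - 1/p) * (∑ n ∈ Finset.Ico (j*kS) ((j+1)*kS), u n ^ p) ^ (1/p : ℝ) := by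
    intro j
    set P : ℝ := ∑ n ∈ Finset.Ico (j*kS) ((j+1)*kS), u n ^ p with hPdef
    have hP0 : 0 ≤ P := Finset.sum_nonneg fun n _ => Real.rpow_nonneg (hu0 n) p
    have hstep : ∀ n ∈ Finset.Ico ((j+1)*kS) ((j+1+1)*kS), (u n)^2 ≤ (P / kS) ^ (2/p : ℝ) := by
      intro n hn
      rw [Finset.mem_Ico] at hn
      have hcard : (j+1)*kS - j*kS = kS := by
        rw [add_mul, one_mul]; exact Nat.add_sub_cancel_left _ _
      have hupP : (kS:ℝ) * (u n) ^ p ≤ P := by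
        have h1 : ∑ _n' ∈ Finset.Ico (j*kS) ((j+1)*kS), (u n) ^ p = (kS:ℝ) * (u n) ^ p := by
          rw [Finset.sum_const, Nat.card_Ico, hcard, nsmul_eq_mul]
        rw [← h1, hPdef]
        refine Finset.sum_le_sum fun n' hn' => ?_
        rw [Finset.mem_Ico] at hn'
        exact Real.rpow_le_rpow (hu0 n) (hu_anti n' n (le_trans (le_of_lt hn'.2) hn.1)) hp0.le
      have hupP2 : (u n) ^ p ≤ P / kS := by
        rw [le_div_iff₀ hkS0, mul_comm]; exact hupP
      calc (u n)^2 = ((u n) ^ p) ^ (2/p : ℝ) := by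
            rw [← Real.rpow_mul (hu0 n), hp2p, Real.rpow_two]
        _ ≤ (P / kS) ^ (2/p : ℝ) :=
            Real.rpow_le_rpow (Real.rpow_nonneg (hu0 n) p) hupP2 (by positivity)
    have hQb : (∑ i, (v (j+1) i)^2) ≤ (kS:ℝ) * (P / kS) ^ (2/p : ℝ) := by
      rw [hQ (j+1)]
      have hcard2 : (j+1+1)*kS - (j+1)*kS = kS := by
        rw [add_mul, one_mul]; exact Nat.add_sub_cancel_left _ _
      calc (∑ n ∈ Finset.Ico ((j+1)*kS) ((j+1+1)*kS), (u n)^2)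
          ≤ ∑ _n ∈ Finset.Ico ((j+1)*kS) ((j+1+1)*kS), (P/kS)^(2/p:ℝ) :=
            Finset.sum_le_sum hstep
        _ = (kS:ℝ) * (P/kS)^(2/p:ℝ) := by
            rw [Finset.sum_const, Nat.card_Ico, hcard2, nsmul_eq_mul]
    calc l2Norm (v (j+1)) ≤ Real.sqrt ((kS:ℝ) * (P / kS) ^ (2/p:ℝ)) := Real.sqrt_le_sqrt hQb
      _ = (kS:ℝ)^((1:ℝ)/2) * ((P/kS) ^ (1/p : ℝ)) := by
          rw [Real.sqrt_mul hkS0.le, Real.sqrt_eq_rpow]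
          congr 1
          rw [show (2/p : ℝ) = (1/p) * 2 by ring, Real.rpow_mul (by positivity), Real.rpow_two]
          exact Real.sqrt_sq (Real.rpow_nonneg (by positivity) _)
      _ = (kS:ℝ)^((1:ℝ)/2 - 1/p) * P ^ (1/p : ℝ) := by
          rw [Real.div_rpow hP0 hkS0.le, Real.rpow_sub hkS0]
          ring
  -- summed tail estimate
  have htail : ∑ j ∈ Finset.range J', l2Norm (v (j+1))
      ≤ (kS:ℝ)^((1:ℝ)/2 - 1/p) * (∑ i ∈ R, |h i| ^ p) ^ (1/p : ℝ) := by
    have hPj0 : ∀ j : ℕ, (0:ℝ) ≤ ∑ n ∈ Finset.Ico (j*kS) ((j+1)*kS), u n ^ p :=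
      fun j => Finset.sum_nonneg fun n _ => Real.rpow_nonneg (hu0 n) p
    have h1 : ∑ j ∈ Finset.range J', l2Norm (v (j+1))
        ≤ (kS:ℝ)^((1:ℝ)/2 - 1/p) *
          ∑ j ∈ Finset.range J', (∑ n ∈ Finset.Ico (j*kS) ((j+1)*kS), u n ^ p) ^ (1/p : ℝ) := by
      rw [Finset.mul_sum]
      exact Finset.sum_le_sum fun j _ => hvnorm j
    have h2 : ∑ j ∈ Finset.range J', (∑ n ∈ Finset.Ico (j*kS) ((j+1)*kS), u n ^ p) ^ (1/p : ℝ)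
        ≤ (∑ j ∈ Finset.range J', ∑ n ∈ Finset.Ico (j*kS) ((j+1)*kS), u n ^ p) ^ (1/p : ℝ) :=
      aux_sum_rpow_le_rpow_sum _ _ (fun j _ => hPj0 j) hinvp
    have hconcat : ∀ n : ℕ, ∑ j ∈ Finset.range n, (∑ i ∈ Finset.Ico (j*kS) ((j+1)*kS), u i ^ p)
        = ∑ i ∈ Finset.Ico 0 (n*kS), u i ^ p := by
      intro n
      induction n with
      | zero => simp
      | succ n ih =>
        rw [Finset.sum_range_succ, ih,
          Finset.sum_Ico_consecutive _ (Nat.zero_le _) (Nat.mul_le_mul_right _ (Nat.le_succ n))]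
    have h3 : ∑ j ∈ Finset.range J', ∑ n ∈ Finset.Ico (j*kS) ((j+1)*kS), u n ^ p
        ≤ ∑ i ∈ R, |h i| ^ p := by
      rw [hsumR, ← hconcat (J'+1), Finset.sum_range_succ]
      exact le_add_of_nonneg_right (hPj0 J')
    have h4 : (∑ j ∈ Finset.range J', ∑ n ∈ Finset.Ico (j*kS) ((j+1)*kS), u n ^ p) ^ (1/p : ℝ)
        ≤ (∑ i ∈ R, |h i| ^ p) ^ (1/p : ℝ) :=
      Real.rpow_le_rpow (Finset.sum_nonneg fun j _ => hPj0 j) h3 (by positivity)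
    calc ∑ j ∈ Finset.range J', l2Norm (v (j+1))
        ≤ _ := h1
      _ ≤ (kS:ℝ)^((1:ℝ)/2 - 1/p) * (∑ i ∈ R, |h i| ^ p) ^ (1/p : ℝ) := by
          exact mul_le_mul_of_nonneg_left (le_trans h2 h4) (Real.rpow_nonneg hkS0.le _)
  -- RIP facts
  have hδ'pos : (0:ℝ) < 1 - δ (kS + S) := by
    have h1 : k ^ (2/p - 1 : ℝ) * δ (kS+S) < k ^ (2/p - 1 : ℝ) * 1 := by
      rw [mul_one]; linarith
    have h2 : δ (kS+S) < 1 := lt_of_mul_lt_mul_left h1 hkt.le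
    linarith
  have hδ1 : (0:ℝ) ≤ 1 + δ kS := by linarith
  have hmv_sum : ∀ (s : Finset ℕ) (w : ℕ → Fin N → ℝ),
      A.mulVec (∑ j ∈ s, w j) = ∑ j ∈ s, A.mulVec (w j) := by
    intro s w
    induction s using Finset.cons_induction with
    | empty => simp [Matrix.mulVec_zero]
    | cons a s ha ih => rw [Finset.sum_cons, Matrix.mulVec_add, ih, Finset.sum_cons]
  have hAv0 : A.mulVec v0 = - ∑ j ∈ Finset.range J', A.mulVec (v (j+1)) := by
    have h0 : A.mulVec v0 + ∑ j ∈ Finset.range J', A.mulVec (v (j+1)) = 0 := by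
      rw [← hmv_sum, ← Matrix.mulVec_add, ← hdecomp, hAh]
    exact eq_neg_of_add_eq_zero_left h0
  have hlow : Real.sqrt (1 - δ (kS+S)) * l2Norm v0 ≤ l2Norm (A.mulVec v0) := by
    obtain ⟨hlo, _⟩ := hRIP (kS+S) v0 hsp_v0
    have h2 := Real.sqrt_le_sqrt hlo
    rwa [Real.sqrt_mul hδ'pos.le, Real.sqrt_sq (l2Norm_nonneg _),
      Real.sqrt_sq (l2Norm_nonneg _)] at h2
  have hup : ∀ j, l2Norm (A.mulVec (v j)) ≤ Real.sqrt (1 + δ kS) * l2Norm (v j) := by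
    intro j
    obtain ⟨_, hhi⟩ := hRIP kS (v j) (hsp_v j)
    have h2 := Real.sqrt_le_sqrt hhi
    rwa [Real.sqrt_mul hδ1, Real.sqrt_sq (l2Norm_nonneg _),
      Real.sqrt_sq (l2Norm_nonneg _)] at h2
  have htri : l2Norm (A.mulVec v0) ≤ ∑ j ∈ Finset.range J', l2Norm (A.mulVec (v (j+1))) := by
    rw [hAv0, l2Norm_neg]
    exact l2Norm_sum_le (Finset.range J') (fun j => A.mulVec (v (j+1)))
  -- comparing the T0 part with v0
  have hT0L : Real.sqrt (∑ i ∈ T0, (h i)^2) ≤ l2Norm v0 := by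
    have h1 : ∀ i, (v0 i)^2 = if i ∈ T0 ∪ Bf 0 then (h i)^2 else 0 := by
      intro i; rw [hv0def]; dsimp only; split <;> simp
    have h2 : ∑ i, (v0 i)^2 = ∑ i ∈ T0 ∪ Bf 0, (h i)^2 := by
      simp only [h1]
      rw [Finset.sum_ite_mem Finset.univ (T0 ∪ Bf 0) (fun i => (h i)^2), Finset.univ_inter]
    have hl2v0 : l2Norm v0 = Real.sqrt (∑ i, (v0 i)^2) := rfl
    rw [hl2v0, h2]
    refine Real.sqrt_le_sqrt ?_
    exact Finset.sum_le_sum_of_subset_of_nonneg Finset.subset_union_left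
      (fun i _ _ => sq_nonneg _)
  -- Hoelder consequence raised to power 1/p
  have hT0p : (∑ i ∈ T0, |h i| ^ p) ^ (1/p : ℝ)
      ≤ (S:ℝ) ^ ((1:ℝ)/p - 1/2) * Real.sqrt (∑ i ∈ T0, (h i)^2) := by
    have h1 := Real.rpow_le_rpow hsumTp0 hHolder (by positivity : (0:ℝ) ≤ 1/p)
    rw [Real.mul_rpow (Real.rpow_nonneg (Nat.cast_nonneg S) _) (Real.rpow_nonneg hsqT0 _),
      ← Real.rpow_mul (Nat.cast_nonneg S), ← Real.rpow_mul hsqT0] at h1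
    have he2 : (p/2) * (1/p) = (1:ℝ)/2 := by
      field_simp
    have he1 : (1 - p/2) * (1/p) = (1:ℝ)/p - 1/2 := by
      rw [sub_mul, one_mul, he2]
    rw [he1, he2] at h1
    rwa [Real.sqrt_eq_rpow]
  have hRp : (∑ i ∈ R, |h i| ^ p) ^ (1/p:ℝ) ≤ (∑ i ∈ T0, |h i| ^ p) ^ (1/p:ℝ) :=
    Real.rpow_le_rpow hsumRp0 hcone (by positivity)
  -- collapse of constants
  have hconst : (kS:ℝ)^((1:ℝ)/2 - 1/p) * (S:ℝ)^((1:ℝ)/p - 1/2) = k ^ ((1:ℝ)/2 - 1/p) := by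
    rw [hkS, Real.mul_rpow hk0.le (Nat.cast_nonneg S),
      show ((1:ℝ)/p - 1/2) = -((1:ℝ)/2 - 1/p) by ring, Real.rpow_neg (Nat.cast_nonneg S),
      mul_assoc, mul_inv_cancel₀ (ne_of_gt (Real.rpow_pos_of_pos hS0 _)), mul_one]
  -- the main chain of inequalities
  have hchain : Real.sqrt (1 - δ (kS+S)) * l2Norm v0
      ≤ Real.sqrt (1 + δ kS) * k ^ ((1:ℝ)/2 - 1/p) * l2Norm v0 := by
    calc Real.sqrt (1 - δ (kS+S)) * l2Norm v0
        ≤ l2Norm (A.mulVec v0) := hlow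
      _ ≤ ∑ j ∈ Finset.range J', l2Norm (A.mulVec (v (j+1))) := htri
      _ ≤ ∑ j ∈ Finset.range J', Real.sqrt (1 + δ kS) * l2Norm (v (j+1)) :=
          Finset.sum_le_sum fun j _ => hup (j+1)
      _ = Real.sqrt (1 + δ kS) * ∑ j ∈ Finset.range J', l2Norm (v (j+1)) := by
          rw [Finset.mul_sum]
      _ ≤ Real.sqrt (1 + δ kS) *
            ((kS:ℝ)^((1:ℝ)/2 - 1/p) * (∑ i ∈ R, |h i| ^ p) ^ (1/p:ℝ)) :=
          mul_le_mul_of_nonneg_left htail (Real.sqrt_nonneg _)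
      _ ≤ Real.sqrt (1 + δ kS) *
            ((kS:ℝ)^((1:ℝ)/2 - 1/p) * (∑ i ∈ T0, |h i| ^ p) ^ (1/p:ℝ)) :=
          mul_le_mul_of_nonneg_left
            (mul_le_mul_of_nonneg_left hRp (Real.rpow_nonneg hkS0.le _)) (Real.sqrt_nonneg _)
      _ ≤ Real.sqrt (1 + δ kS) *
            ((kS:ℝ)^((1:ℝ)/2 - 1/p) *
              ((S:ℝ)^((1:ℝ)/p - 1/2) * Real.sqrt (∑ i ∈ T0, (h i)^2))) :=
          mul_le_mul_of_nonneg_left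
            (mul_le_mul_of_nonneg_left hT0p (Real.rpow_nonneg hkS0.le _)) (Real.sqrt_nonneg _)
      _ ≤ Real.sqrt (1 + δ kS) *
            ((kS:ℝ)^((1:ℝ)/2 - 1/p) * ((S:ℝ)^((1:ℝ)/p - 1/2) * l2Norm v0)) :=
          mul_le_mul_of_nonneg_left
            (mul_le_mul_of_nonneg_left
              (mul_le_mul_of_nonneg_left hT0L (Real.rpow_nonneg (Nat.cast_nonneg S) _))
              (Real.rpow_nonneg hkS0.le _)) (Real.sqrt_nonneg _)
      _ = Real.sqrt (1 + δ kS) * k ^ ((1:ℝ)/2 - 1/p) * l2Norm v0 := by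
          rw [show (kS:ℝ)^((1:ℝ)/2 - 1/p) * ((S:ℝ)^((1:ℝ)/p - 1/2) * l2Norm v0)
              = ((kS:ℝ)^((1:ℝ)/2 - 1/p) * (S:ℝ)^((1:ℝ)/p - 1/2)) * l2Norm v0 by ring, hconst]
          ring
  -- strict comparison of the constants
  have hcomp : Real.sqrt (1 + δ kS) * k ^ ((1:ℝ)/2 - 1/p) < Real.sqrt (1 - δ (kS+S)) := by
    have h1 : k ^ ((1:ℝ)/2 - 1/p) = Real.sqrt (k ^ (1 - 2/p : ℝ)) := by
      rw [Real.sqrt_eq_rpow, ← Real.rpow_mul hk0.le]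
      congr 1
      ring
    rw [h1, ← Real.sqrt_mul hδ1]
    refine Real.sqrt_lt_sqrt (mul_nonneg hδ1 (Real.rpow_nonneg hk0.le _)) ?_
    have h2 : k ^ (1 - 2/p : ℝ) = (k ^ (2/p - 1 : ℝ))⁻¹ := by
      rw [show (1 - 2/p : ℝ) = -(2/p - 1) by ring, Real.rpow_neg hk0.le]
    rw [h2, ← div_eq_mul_inv, div_lt_iff₀ hkt]
    nlinarith [hcond]
  -- conclude that l2Norm v0 = 0
  have hL0 : l2Norm v0 = 0 := by
    have hnn := l2Norm_nonneg v0
    nlinarith [hchain, hcomp, hnn]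
  have hsumv0 : ∑ i, (v0 i)^2 = 0 := by
    have hsq := l2Norm_sq v0
    rw [hL0] at hsq
    simpa using hsq.symm
  have hv0zero : ∀ i, v0 i = 0 := by
    intro i
    have h1 := (Finset.sum_eq_zero_iff_of_nonneg
      (fun i _ => sq_nonneg (v0 i))).mp hsumv0 i (Finset.mem_univ i)
    exact pow_eq_zero_iff (two_ne_zero) |>.mp h1
  have hT0zero : ∀ i ∈ T0, h i = 0 := by
    intro i hi
    have hv := hv0zero i
    rw [hv0def] at hv; dsimp only at hv
    rwa [if_pos (Finset.mem_union_left _ hi)] at hv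
  have hT0p0 : ∑ i ∈ T0, |h i| ^ p = 0 :=
    Finset.sum_eq_zero fun i hi => by
      rw [hT0zero i hi, abs_zero, Real.zero_rpow hp0.ne']
  have hR0 : ∀ i ∈ R, h i = 0 := by
    intro i hi
    have hle : ∑ i ∈ R, |h i| ^ p ≤ 0 := hT0p0 ▸ hcone
    have heq : ∑ i ∈ R, |h i| ^ p = 0 := le_antisymm hle hsumRp0
    have h1 := (Finset.sum_eq_zero_iff_of_nonneg
      (fun i _ => Real.rpow_nonneg (abs_nonneg _) p)).mp heq i hi
    by_contra hne
    have h2 := Real.rpow_pos_of_pos (abs_pos.mpr hne) p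
    linarith
  funext i
  show h i = (0 : Fin N → ℝ) i
  rw [Pi.zero_apply]
  by_cases hxi : x i ≠ 0
  · exact hT0zero i (by rw [hT0def, Finset.mem_filter]; exact ⟨Finset.mem_univ _, hxi⟩)
  · exact hR0 i (by rw [hRdef, Finset.mem_filter]; exact ⟨Finset.mem_univ _, hxi⟩)
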